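/- Let A and B be n×n Hermitian matrices, and let α = u + iv with v > 0. Then |Tr (A − αI)⁻¹ − Tr (B − αI)⁻¹| ≤ rank(A − B) / v. -/

import Mathlib

open Matrix

lemma dot_star_self {n : ℕ} (x : Fin n → ℂ) :
    star x ⬝ᵥ x = ((∑ i, Complex.normSq (x i) : ℝ) : ℂ) := by
  push_cast
  simp only [dotProduct, Pi.star_apply]
  congr 1; ext i
  rw [← Complex.mul_conj, mul_comm]
  rfl

lemma vecMulVec_star_isHermitian {n : ℕ} (w : Fin n → ℂ) :
    (vecMulVec w (star w)).IsHermitian := by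
  ext i j
  simp [Matrix.conjTranspose_apply, vecMulVec_apply, mul_comm]


lemma herm_sub_smul_isUnit {n : ℕ} {M : Matrix (Fin n) (Fin n) ℂ} (hM : M.IsHermitian)
    {α : ℂ} (hα : α.im ≠ 0) : IsUnit (M - α • (1 : Matrix (Fin n) (Fin n) ℂ)) := by
  rw [Matrix.isUnit_iff_isUnit_det, isUnit_iff_ne_zero]
  intro h
  obtain ⟨v, hv, hMv⟩ := (Matrix.exists_mulVec_eq_zero_iff).2 h
  have hMv' : M *ᵥ v = α • v := by
    have := hMv
    rw [Matrix.sub_mulVec, sub_eq_zero] at this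
    simpa [Matrix.smul_mulVec] using this
  have key : star v ⬝ᵥ (M *ᵥ v) = star (star v ⬝ᵥ (M *ᵥ v)) := by
    conv_rhs => rw [Matrix.star_dotProduct, star_star]
    rw [Matrix.star_mulVec, hM.eq, ← Matrix.dotProduct_mulVec]
  have hq : star v ⬝ᵥ v = ((∑ i, Complex.normSq (v i) : ℝ) : ℂ) := by
    push_cast
    simp only [dotProduct, Pi.star_apply]
    congr 1; ext i
    rw [← Complex.mul_conj, mul_comm]
    rfl
  have hz : star v ⬝ᵥ (M *ᵥ v) = α * (star v ⬝ᵥ v) := by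
    rw [hMv', dotProduct_smul, smul_eq_mul]
  rw [hz, hq] at key
  have hsum : (0:ℝ) < ∑ i, Complex.normSq (v i) := by
    have : ∃ i, v i ≠ 0 := by
      by_contra hc
      push_neg at hc
      exact hv (funext hc)
    obtain ⟨i, hi⟩ := this
    exact Finset.sum_pos' (fun j _ => Complex.normSq_nonneg _)
      ⟨i, Finset.mem_univ i, Complex.normSq_pos.2 hi⟩
  have him0 : (α * ((∑ i, Complex.normSq (v i) : ℝ) : ℂ)).im = 0 := by
    have := congrArg Complex.im key
    simp only [Complex.star_def, Complex.conj_im] at this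
    linarith
  rw [Complex.mul_im] at him0
  simp only [Complex.ofReal_re, Complex.ofReal_im, mul_zero, add_zero, zero_add] at him0
  rcases mul_eq_zero.1 him0 with h' | h'
  · exact hα h'
  · exact absurd h' (ne_of_gt hsum)


-- small algebra lemmas
lemma trace_mul_vecMulVec {n : ℕ} (X : Matrix (Fin n) (Fin n) ℂ) (a b : Fin n → ℂ) :
    (X * vecMulVec a b).trace = b ⬝ᵥ (X *ᵥ a) := by
  simp only [Matrix.trace, Matrix.diag, Matrix.mul_apply, vecMulVec_apply, dotProduct,
    Matrix.mulVec, Finset.mul_sum, Finset.sum_mul]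
  congr 1; ext i; congr 1; ext j; ring

lemma vecMulVec_mul_mul_vecMulVec {n : ℕ} (X : Matrix (Fin n) (Fin n) ℂ) (a b : Fin n → ℂ) :
    vecMulVec a b * X * vecMulVec a b = (b ⬝ᵥ (X *ᵥ a)) • vecMulVec a b := by
  ext i j
  simp only [Matrix.mul_apply, vecMulVec_apply, dotProduct, Matrix.mulVec, Matrix.smul_apply,
    Finset.mul_sum, Finset.sum_mul, smul_eq_mul]
  rw [Finset.sum_comm]
  congr 1; ext k; congr 1; ext l; ring

lemma unitary_diag_decomp {n : ℕ} (U : Matrix (Fin n) (Fin n) ℂ) (d : Fin n → ℂ) :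
    U * diagonal d * Uᴴ
      = ∑ i, d i • vecMulVec (fun a => U a i) (star (fun b => U b i)) := by
  ext a b
  rw [Matrix.sum_apply]
  simp only [Matrix.mul_apply, Matrix.mul_diagonal, Matrix.conjTranspose_apply,
    Matrix.smul_apply, vecMulVec_apply, Pi.star_apply, smul_eq_mul]
  congr 1; ext k
  have : (∑ x : Fin n, U a x * diagonal d x k) = U a k * d k := by
    simp [Matrix.diagonal_apply, mul_ite, mul_zero, Finset.sum_ite_eq' Finset.univ k]
  rw [this]
  ring

lemma step_rank_one {n : ℕ} {M : Matrix (Fin n) (Fin n) ℂ} (hM : M.IsHermitian)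
    {α : ℂ} (hv : 0 < α.im) (t : ℝ) (w : Fin n → ℂ) :
    ‖(M + (t : ℂ) • vecMulVec w (star w) - α • 1)⁻¹.trace
        - (M - α • (1 : Matrix (Fin n) (Fin n) ℂ))⁻¹.trace‖ ≤ 1 / α.im := by
  have hα : α.im ≠ 0 := ne_of_gt hv
  by_cases ht : t = 0
  · subst ht
    simp only [Complex.ofReal_zero, zero_smul, add_zero, sub_self, norm_zero]
    positivity
  by_cases hw : w = 0
  · subst hw
    have : vecMulVec (0 : Fin n → ℂ) (star (0 : Fin n → ℂ)) = (0 : Matrix (Fin n) (Fin n) ℂ) := by ext i j; simp [vecMulVec_apply]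
    rw [this]
    simp only [smul_zero, add_zero, sub_self, norm_zero]
    positivity
  set V : Matrix (Fin n) (Fin n) ℂ := vecMulVec w (star w) with hV
  set M' : Matrix (Fin n) (Fin n) ℂ := M + (t : ℂ) • V with hM'def
  have hVh : V.IsHermitian := vecMulVec_star_isHermitian w
  have htVh : ((t : ℂ) • V).IsHermitian := by
    show ((t : ℂ) • V)ᴴ = _
    rw [Matrix.conjTranspose_smul, hVh.eq]
    norm_num
  have hM'h : M'.IsHermitian := hM.add htVh
  have hUA : IsUnit (M - α • (1 : Matrix (Fin n) (Fin n) ℂ)) := herm_sub_smul_isUnit hM hα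
  have hUB : IsUnit (M' - α • (1 : Matrix (Fin n) (Fin n) ℂ)) := herm_sub_smul_isUnit hM'h hα
  have hUAd : IsUnit (M - α • (1 : Matrix (Fin n) (Fin n) ℂ)).det :=
    (Matrix.isUnit_iff_isUnit_det _).1 hUA
  have hUBd : IsUnit (M' - α • (1 : Matrix (Fin n) (Fin n) ℂ)).det :=
    (Matrix.isUnit_iff_isUnit_det _).1 hUB
  set RA : Matrix (Fin n) (Fin n) ℂ := (M - α • 1)⁻¹ with hRA
  set RB : Matrix (Fin n) (Fin n) ℂ := (M' - α • 1)⁻¹ with hRB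
  have hRA1 : (M - α • 1) * RA = 1 := Matrix.mul_nonsing_inv _ hUAd
  have hRA1' : RA * (M - α • 1) = 1 := Matrix.nonsing_inv_mul _ hUAd
  -- conjugate resolvent
  have hAH : RAᴴ = (M - (starRingEnd ℂ α) • 1)⁻¹ := by
    rw [hRA, Matrix.conjTranspose_nonsing_inv]
    congr 1
    rw [Matrix.conjTranspose_sub, Matrix.conjTranspose_smul, hM.eq, Matrix.conjTranspose_one]
    rfl
  have hUAH : IsUnit RAᴴ := by
    rw [hAH]
    exact (Matrix.isUnit_nonsing_inv_iff).2 (herm_sub_smul_isUnit hM (by simpa using hα))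
  have hUAHd : IsUnit (M - (starRingEnd ℂ α) • (1 : Matrix (Fin n) (Fin n) ℂ)).det :=
    (Matrix.isUnit_iff_isUnit_det _).1 (herm_sub_smul_isUnit hM (by simpa using hα))
  -- RA and RAᴴ commute
  have hcommM : (M - α • (1 : Matrix (Fin n) (Fin n) ℂ)) * (M - (starRingEnd ℂ α) • 1)
      = (M - (starRingEnd ℂ α) • 1) * (M - α • (1 : Matrix (Fin n) (Fin n) ℂ)) := by
    simp only [Matrix.sub_mul, Matrix.mul_sub, Matrix.smul_mul, Matrix.mul_smul,
      Matrix.one_mul, Matrix.mul_one, smul_smul, smul_sub]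
    rw [mul_comm α]
    abel
  have hcomm : RA * RAᴴ = RAᴴ * RA := by
    rw [hAH, hRA, ← Matrix.mul_inv_rev, ← Matrix.mul_inv_rev, hcommM]
  -- the skew part of the resolvent
  have hskew : RA - RAᴴ = (α - starRingEnd ℂ α) • (RA * RAᴴ) := by
    have h1 : RA * ((M - (starRingEnd ℂ α) • 1) * RAᴴ) = RA := by
      rw [hAH, Matrix.mul_nonsing_inv _ hUAHd, Matrix.mul_one]
    have h2 : (RA * (M - α • 1)) * RAᴴ = RAᴴ := by
      rw [hRA1', Matrix.one_mul]
    calc RA - RAᴴ = RA * ((M - (starRingEnd ℂ α) • 1) * RAᴴ) - (RA * (M - α • 1)) * RAᴴ := by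
          rw [h1, h2]
      _ = RA * (((M - (starRingEnd ℂ α) • 1) - (M - α • 1)) * RAᴴ) := by
          simp only [Matrix.sub_mul, Matrix.mul_sub, Matrix.mul_assoc]
      _ = (α - starRingEnd ℂ α) • (RA * RAᴴ) := by
          have : (M - (starRingEnd ℂ α) • 1) - (M - α • (1 : Matrix (Fin n) (Fin n) ℂ))
              = (α - starRingEnd ℂ α) • 1 := by
            rw [sub_smul]; abel
          rw [this, Matrix.smul_mul, Matrix.one_mul, Matrix.mul_smul]
  -- the key vectors and scalars
  set s : Fin n → ℂ := RAᴴ *ᵥ w with hs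
  set y : Fin n → ℂ := RA *ᵥ w with hy
  have hstars : star s = star w ᵥ* RA := by
    rw [hs, Matrix.star_mulVec, Matrix.conjTranspose_conjTranspose]
  have hdots : ∀ x : Fin n → ℂ, star w ⬝ᵥ (RA *ᵥ x) = star s ⬝ᵥ x := by
    intro x
    rw [hstars, ← Matrix.dotProduct_mulVec]
  set c : ℝ := ∑ i, Complex.normSq (s i) with hc
  have hcpos : 0 < c := by
    have hsne : s ≠ 0 := by
      intro h0
      apply hw
      have : (RAᴴ)⁻¹ *ᵥ s = w := by
        rw [hs, Matrix.mulVec_mulVec, Matrix.nonsing_inv_mul _ ((Matrix.isUnit_iff_isUnit_det _).1 hUAH), Matrix.one_mulVec]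
      rw [← this, h0, Matrix.mulVec_zero]
    have : ∃ i, s i ≠ 0 := by
      by_contra hcon; push_neg at hcon; exact hsne (funext hcon)
    obtain ⟨i, hi⟩ := this
    exact Finset.sum_pos' (fun j _ => Complex.normSq_nonneg _)
      ⟨i, Finset.mem_univ i, Complex.normSq_pos.2 hi⟩
  set r1 : ℂ := star w ⬝ᵥ y with hr1
  set r2 : ℂ := star w ⬝ᵥ (RA *ᵥ y) with hr2
  set f : ℂ := 1 + (t : ℂ) * r1 with hf
  -- imaginary part of r1
  have hr1im : r1.im = α.im * c := by
    have hstar_r1 : star r1 = star w ⬝ᵥ s := by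
      rw [hr1]
      conv_lhs => rw [← Matrix.star_dotProduct]
      rw [hy, Matrix.star_mulVec, ← Matrix.dotProduct_mulVec, ← hs]
    have hdiff : r1 - star r1 = (α - starRingEnd ℂ α) * ((c : ℝ) : ℂ) := by
      rw [hr1, hstar_r1, ← dotProduct_sub]
      have : y - s = (RA - RAᴴ) *ᵥ w := by rw [Matrix.sub_mulVec]
      rw [this, hskew, Matrix.smul_mulVec, dotProduct_smul, smul_eq_mul]
      congr 1
      rw [← Matrix.mulVec_mulVec, hdots, ← hs, dot_star_self, hc]
    have := congrArg Complex.im hdiff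
    simp only [Complex.sub_im, Complex.mul_im, Complex.sub_re, Complex.ofReal_re,
      Complex.ofReal_im, Complex.star_def, Complex.conj_im, Complex.conj_re, mul_zero,
      add_zero, sub_self, sub_zero, sub_neg_eq_add] at this
    linarith
  -- ‖y‖ = ‖s‖
  have hyc : ∑ i, Complex.normSq (y i) = c := by
    have h1 : star y ⬝ᵥ y = star s ⬝ᵥ s := by
      have hstary : star y = star w ᵥ* RAᴴ := by rw [hy, Matrix.star_mulVec]
      rw [hstary, ← Matrix.dotProduct_mulVec, hy, Matrix.mulVec_mulVec, ← hcomm,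
        ← Matrix.mulVec_mulVec, hdots, ← hs]
    rw [dot_star_self, dot_star_self] at h1
    exact_mod_cast h1
  -- bound on r2
  have hr2s : r2 = star s ⬝ᵥ y := by rw [hr2, hdots]
  have hr2bound : ‖r2‖ ≤ c := by
    have h1 : ‖r2‖ ≤ ∑ i, ‖s i‖ * ‖y i‖ := by
      rw [hr2s]
      refine le_trans (norm_sum_le _ _) ?_
      apply Finset.sum_le_sum
      intro i _
      simp only [dotProduct, Pi.star_apply, norm_mul, Complex.star_def, Complex.norm_conj, le_refl]
    have h2 : (∑ i, ‖s i‖ * ‖y i‖) ^ 2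
        ≤ (∑ i, ‖s i‖ ^ 2) * (∑ i, ‖y i‖ ^ 2) :=
      Finset.sum_mul_sq_le_sq_mul_sq _ _ _
    have h3 : (∑ i, ‖s i‖ ^ 2) = c := by
      rw [hc]; congr 1; ext i; rw [Complex.sq_norm]
    have h4 : (∑ i, ‖y i‖ ^ 2) = c := by
      rw [← hyc]; congr 1; ext i; rw [Complex.sq_norm]
    rw [h3, h4] at h2
    have h5 : (∑ i, ‖s i‖ * ‖y i‖) ≤ c := by
      nlinarith [Finset.sum_nonneg (fun i (_ : i ∈ Finset.univ) =>
        mul_nonneg (norm_nonneg (s i)) (norm_nonneg (y i)))]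
    linarith
  -- f is nonzero with controlled modulus
  have hfim : f.im = t * (α.im * c) := by
    rw [hf]
    simp [Complex.add_im, Complex.mul_im, hr1im]
  have hf0 : f ≠ 0 := by
    intro h0
    rw [h0] at hfim
    simp only [Complex.zero_im] at hfim
    rcases mul_eq_zero.1 hfim.symm with h' | h'
    · exact ht h'
    · rcases mul_eq_zero.1 h' with h'' | h''
      · exact hα h''
      · exact absurd h'' (ne_of_gt hcpos)
  have hfabs : |t| * (α.im * c) ≤ ‖f‖ := by
    calc |t| * (α.im * c) = |f.im| := by
          rw [hfim, abs_mul, abs_of_pos (mul_pos hv hcpos)]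
      _ ≤ ‖f‖ := Complex.abs_im_le_norm f
  -- Sherman--Morrison
  set X : Matrix (Fin n) (Fin n) ℂ := RA * V with hX
  have hXX : X * X = r1 • X := by
    rw [hX, Matrix.mul_assoc RA V (RA * V), ← Matrix.mul_assoc V RA V, hV,
      vecMulVec_mul_mul_vecMulVec, ← hy, ← hr1]
    rw [Matrix.mul_smul]
  set N : Matrix (Fin n) (Fin n) ℂ := 1 + (t : ℂ) • X with hN
  have hMN : (M - α • 1) * N = M' - α • 1 := by
    rw [hN, Matrix.mul_add, Matrix.mul_one, Matrix.mul_smul, hX, ← Matrix.mul_assoc,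
      hRA1, Matrix.one_mul, hM'def]
    abel
  have hNinv : N⁻¹ = 1 - ((t : ℂ) / f) • X := by
    apply Matrix.inv_eq_right_inv
    rw [hN]
    rw [Matrix.add_mul, Matrix.one_mul, Matrix.mul_sub, Matrix.mul_one, Matrix.smul_mul,
      Matrix.mul_smul, hXX]
    rw [smul_smul, smul_smul]
    have hcoef : (t : ℂ) - ((t : ℂ) / f + ((t : ℂ) * ((t : ℂ) / f)) * r1) = 0 := by
      field_simp [hf0]
      rw [hf]
      ring
    calc 1 - ((t : ℂ) / f) • X + ((t : ℂ) • X - ((t : ℂ) * ((t : ℂ) / f) * r1) • X)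
        = 1 + ((t : ℂ) - ((t : ℂ) / f + ((t : ℂ) * ((t : ℂ) / f)) * r1)) • X := by
          rw [sub_smul, add_smul]
          abel
      _ = 1 := by rw [hcoef, zero_smul, add_zero]
  have hRBeq : RB = N⁻¹ * RA := by
    rw [hRB, ← hMN, Matrix.mul_inv_rev, hRA]
  -- the trace identity
  have htr : RB.trace - RA.trace = -((t : ℂ) / f) * r2 := by
    have hdiff : RB - RA = (-((t : ℂ) / f)) • (X * RA) := by
      rw [hRBeq, hNinv, Matrix.sub_mul, Matrix.one_mul, Matrix.smul_mul, neg_smul]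
      abel
    have : (X * RA).trace = r2 := by
      rw [hX, Matrix.mul_assoc, trace_mul_comm, Matrix.mul_assoc, trace_mul_comm, hV,
        trace_mul_vecMulVec, hr2, hy, Matrix.mulVec_mulVec]
    rw [← Matrix.trace_sub, hdiff, Matrix.trace_smul, this, smul_eq_mul]
  -- final bound
  have habs : ‖RB.trace - RA.trace‖ ≤ 1 / α.im := by
    rw [htr]
    rw [norm_mul, norm_neg, norm_div, Complex.norm_real, Real.norm_eq_abs]
    rw [div_mul_eq_mul_div]
    rw [div_le_div_iff₀ (norm_pos_iff.mpr hf0) hv]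
    calc |t| * ‖r2‖ * α.im ≤ |t| * c * α.im := by
          have := mul_le_mul_of_nonneg_left hr2bound (abs_nonneg t)
          nlinarith
      _ = |t| * (α.im * c) := by ring
      _ ≤ ‖f‖ := hfabs
      _ = 1 * ‖f‖ := (one_mul _).symm
  exact habs


/-- Resolvent trace comparison: for Hermitian `A`, `B` and `α` with `Im α = v > 0`,
`|Tr (A − αI)⁻¹ − Tr (B − αI)⁻¹| ≤ rank(A − B) / v`. -/
theorem trace_resolvent_diff_le_rank
    (n : ℕ) (A B : Matrix (Fin n) (Fin n) ℂ)
    (hA : A.IsHermitian) (hB : B.IsHermitian)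
    (α : ℂ) (hv : 0 < α.im) :
    ‖(A - α • (1 : Matrix (Fin n) (Fin n) ℂ))⁻¹.trace
        - (B - α • (1 : Matrix (Fin n) (Fin n) ℂ))⁻¹.trace‖
      ≤ ((A - B).rank : ℝ) / α.im := by
  have hα : α.im ≠ 0 := ne_of_gt hv
  set C : Matrix (Fin n) (Fin n) ℂ := A - B with hC
  have hCh : C.IsHermitian := hA.sub hB
  set d : Fin n → ℝ := hCh.eigenvalues with hd
  set U : Matrix (Fin n) (Fin n) ℂ := (hCh.eigenvectorUnitary : Matrix (Fin n) (Fin n) ℂ)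
    with hU
  set u : Fin n → Fin n → ℂ := fun i => (fun a => U a i) with hu
  have hdecomp : C = ∑ i, ((d i : ℝ) : ℂ) • vecMulVec (u i) (star (u i)) := by
    calc C = U * diagonal (RCLike.ofReal ∘ d) * star U := hCh.spectral_theorem
      _ = U * diagonal (fun i => ((d i : ℝ) : ℂ)) * Uᴴ := by
          rw [Matrix.star_eq_conjTranspose]; rfl
      _ = ∑ i, ((d i : ℝ) : ℂ) • vecMulVec (u i) (star (u i)) :=
          unitary_diag_decomp U _
  set g : Finset (Fin n) → Matrix (Fin n) (Fin n) ℂ :=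
    fun S => B + ∑ i ∈ S, ((d i : ℝ) : ℂ) • vecMulVec (u i) (star (u i)) with hg
  have hgh : ∀ S : Finset (Fin n), (g S).IsHermitian := by
    intro S
    show (g S)ᴴ = g S
    rw [hg]
    simp only [Matrix.conjTranspose_add, hB.eq]
    congr 1
    rw [Matrix.conjTranspose_sum]
    refine Finset.sum_congr rfl (fun i _ => ?_)
    rw [Matrix.conjTranspose_smul, (vecMulVec_star_isHermitian (u i)).eq]
    norm_num
  have hkey : ∀ S : Finset (Fin n),
      ‖((g S) - α • 1)⁻¹.trace
        - (B - α • (1 : Matrix (Fin n) (Fin n) ℂ))⁻¹.trace‖ ≤ (S.card : ℝ) / α.im := by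
    intro S
    induction S using Finset.induction_on with
    | empty => simp [hg]
    | @insert a S ha ih =>
      have hgeq : g (insert a S) = g S + ((d a : ℝ) : ℂ) • vecMulVec (u a) (star (u a)) := by
        rw [hg]
        simp only
        rw [Finset.sum_insert ha]
        abel
      have hstep := step_rank_one (hgh S) hv (d a) (u a)
      calc ‖((g (insert a S)) - α • 1)⁻¹.trace
              - (B - α • (1 : Matrix (Fin n) (Fin n) ℂ))⁻¹.trace‖
          ≤ ‖((g (insert a S)) - α • 1)⁻¹.trace - ((g S) - α • 1)⁻¹.trace‖
            + ‖((g S) - α • 1)⁻¹.trace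
              - (B - α • (1 : Matrix (Fin n) (Fin n) ℂ))⁻¹.trace‖ :=
            norm_sub_le_norm_sub_add_norm_sub _ _ _
        _ ≤ 1 / α.im + (S.card : ℝ) / α.im := by
            refine add_le_add ?_ ih
            rw [hgeq]
            exact hstep
        _ = ((insert a S).card : ℝ) / α.im := by
            rw [Finset.card_insert_of_notMem ha]
            push_cast
            rw [← add_div, add_comm]
  set S₀ : Finset (Fin n) := Finset.filter (fun i => d i ≠ 0) Finset.univ with hS₀
  have hAg : g S₀ = A := by
    rw [hg]
    simp only
    have hsum : ∑ i ∈ S₀, ((d i : ℝ) : ℂ) • vecMulVec (u i) (star (u i))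
        = ∑ i, ((d i : ℝ) : ℂ) • vecMulVec (u i) (star (u i)) := by
      rw [hS₀]
      refine Finset.sum_filter_of_ne (fun i _ hne => ?_)
      intro h0
      apply hne
      rw [h0]
      norm_num
    rw [hsum, ← hdecomp, hC]
    abel
  have hcard : (S₀.card : ℕ) = C.rank := by
    rw [hCh.rank_eq_card_non_zero_eigs, Fintype.card_subtype]
  have := hkey S₀
  rw [hAg] at this
  have hrank : ((C.rank : ℕ) : ℝ) = ((S₀.card : ℕ) : ℝ) := by
    exact_mod_cast congrArg (fun x : ℕ => (x : ℝ)) hcard.symm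
  rw [hC] at hrank
  rw [hrank]
  exact this
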